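/- Let p : ℂ → ℂ be a polynomial, J ⊆ ℂ a nonempty compact set with p(J) ⊆ J, and (a,b,c) ∈ ℂ³ with (a,b,c) ≠ (0,0,0) and a y² + b y + c ≠ 0 for every y ∈ J. Then there exists T₀ > 0 such that for all T ∈ ℂ with |T| ≥ T₀, for every z ∈ J and every w ∈ ℂ: if |w² + T(a z² + b z + c)| < inf_{y ∈ J} |T(a y² + b y + c)|, then |w| < inf_{y ∈ J} |T(a y² + b y + c)|. -/

import Mathlib

/-- Admissibility is preserved under pullback: for `F_T(z,w) = (p(z), w² + T(a z² + b z + c))`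
with `a X² + b X + c` nonvanishing on a compact `p`-invariant set `J`, for `|T|` large,
if the image of `w` in the fiber over `z ∈ J` has modulus less than
`r(F_T) = inf_{y∈J} |T(a y² + b y + c)|`, then so does `w` itself. -/
theorem admissible_preimage
    (p : Polynomial ℂ) (J : Set ℂ) (hJne : J.Nonempty) (hJc : IsCompact J)
    (hJinv : ∀ z ∈ J, p.eval z ∈ J)
    (a b c : ℂ) (habc : (a, b, c) ≠ (0, 0, 0))
    (hroots : ∀ y ∈ J, a * y ^ 2 + b * y + c ≠ 0) :
    ∃ T₀ : ℝ, 0 < T₀ ∧ ∀ T : ℂ, T₀ ≤ ‖T‖ →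
      ∀ z ∈ J, ∀ w : ℂ,
        ‖w ^ 2 + T * (a * z ^ 2 + b * z + c)‖ <
            sInf ((fun y => ‖T * (a * y ^ 2 + b * y + c)‖) '' J) →
        ‖w‖ <
            sInf ((fun y => ‖T * (a * y ^ 2 + b * y + c)‖) '' J) := by
  set f : ℂ → ℝ := fun y => ‖a * y ^ 2 + b * y + c‖ with hf
  have hfc : Continuous f := by
    apply continuous_norm.comp
    continuity
  obtain ⟨y₀, hy₀J, hmin⟩ := hJc.exists_isMinOn hJne hfc.continuousOn
  obtain ⟨y₁, hy₁J, hmax⟩ := hJc.exists_isMaxOn hJne hfc.continuousOn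
  set m : ℝ := f y₀ with hm
  set M : ℝ := f y₁ with hM
  have hm0 : 0 < m := by
    have := hroots y₀ hy₀J
    simpa [hm, hf, norm_pos_iff] using this
  have hmM : m ≤ M := hmax hy₀J
  have hM0 : 0 < M := lt_of_lt_of_le hm0 hmM
  refine ⟨max 1 (2 * M / m ^ 2), lt_of_lt_of_le one_pos (le_max_left _ _), ?_⟩
  intro T hT z hz w hw
  have hT1 : (1 : ℝ) ≤ ‖T‖ := le_trans (le_max_left _ _) hT
  have hT0 : 0 < ‖T‖ := lt_of_lt_of_le one_pos hT1
  set S := ((fun y => ‖T * (a * y ^ 2 + b * y + c)‖) '' J) with hS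
  have hSbdd : BddBelow S := by
    refine ⟨0, ?_⟩
    rintro x ⟨y, _, rfl⟩
    positivity
  have hSle : sInf S ≤ ‖T‖ * f z :=
    csInf_le hSbdd ⟨z, hz, by simp [hf, norm_mul]⟩
  have hleS : ‖T‖ * m ≤ sInf S := by
    apply le_csInf (hJne.image _)
    rintro x ⟨y, hy, rfl⟩
    dsimp only
    rw [norm_mul]
    exact mul_le_mul_of_nonneg_left (hmin hy) hT0.le
  have hfzM : f z ≤ M := hmax hz
  have hsq : ‖w‖ ^ 2 < 2 * (‖T‖ * M) := by
    have h1 : ‖w ^ 2‖ ≤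
        ‖w ^ 2 + T * (a * z ^ 2 + b * z + c)‖ +
          ‖T * (a * z ^ 2 + b * z + c)‖ := by
      have h0 := norm_sub_le (w ^ 2 + T * (a * z ^ 2 + b * z + c))
          (T * (a * z ^ 2 + b * z + c))
      rw [add_sub_cancel_right] at h0
      exact h0
    have h2 : ‖T * (a * z ^ 2 + b * z + c)‖ ≤ ‖T‖ * M := by
      rw [norm_mul]
      exact mul_le_mul_of_nonneg_left hfzM hT0.le
    have h3 : sInf S ≤ ‖T‖ * M :=
      le_trans hSle (mul_le_mul_of_nonneg_left hfzM hT0.le)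
    calc ‖w‖ ^ 2 = ‖w ^ 2‖ := by rw [norm_pow]
      _ ≤ _ := h1
      _ < sInf S + ‖T‖ * M := by linarith [hw, h2]
      _ ≤ _ := by linarith [h3]
  have hkey : 2 * (‖T‖ * M) ≤ (‖T‖ * m) ^ 2 := by
    have hTbig : 2 * M / m ^ 2 ≤ ‖T‖ := le_trans (le_max_right _ _) hT
    have : 2 * M ≤ ‖T‖ * m ^ 2 := by
      rw [div_le_iff₀ (by positivity)] at hTbig
      linarith
    calc 2 * (‖T‖ * M) = ‖T‖ * (2 * M) := by ring
      _ ≤ ‖T‖ * (‖T‖ * m ^ 2) :=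
          mul_le_mul_of_nonneg_left this hT0.le
      _ = (‖T‖ * m) ^ 2 := by ring
  have hwlt : ‖w‖ < ‖T‖ * m := by
    have := lt_of_lt_of_le hsq hkey
    exact lt_of_pow_lt_pow_left₀ 2 (by positivity) this
  exact lt_of_lt_of_le hwlt hleS
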